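/- arXiv:1103.6089 — 2 statements merged into one kernel-verified Lean document; each statement's English description precedes it below -/
import Mathlib

section
/- For d ∈ {2,3}, suppose u ∈ L²(ℝ^d) satisfies ⟨û, (|ξ|² + i) f̂⟩ = 0 for all f̂ ∈ (1+|ξ|²)^{−1}L²(ℝ^d) with ∫_{ℝ^d} f̂(ξ) dξ = 0. Then there exists a constant c ∈ ℂ with (|ξ|² − i) û(ξ) = c almost everywhere, i.e. û(ξ) = c/(|ξ|² − i). -/
open MeasureTheory Complex
set_option maxHeartbeats 1000000

/-- for d ∈ {2,3}, if w = û ∈ L²(ℝ^d) is orthogonal (in Fourier space) to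
(|ξ|² + i)f̂ for all f̂ ∈ (1+|ξ|²)⁻¹L²(ℝ^d) with ∫ f̂ = 0, then (|ξ|² − i)w is a.e. equal
to a constant c, i.e. w(ξ) = c/(|ξ|² − i). -/
theorem stmt9 (d : ℕ) (hd : d = 2 ∨ d = 3) (w : EuclideanSpace ℝ (Fin d) → ℂ)
    (hw : MemLp w 2 (volume : Measure (EuclideanSpace ℝ (Fin d))))
    (horth : ∀ g : EuclideanSpace ℝ (Fin d) → ℂ,
      MemLp (fun ξ => (1 + (‖ξ‖^2 : ℂ)) * g ξ) 2 (volume : Measure (EuclideanSpace ℝ (Fin d))) →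
      Integrable g (volume : Measure (EuclideanSpace ℝ (Fin d))) →
      (∫ ξ, g ξ) = 0 →
      ∫ ξ, w ξ * starRingEnd ℂ (((‖ξ‖^2 : ℂ) + Complex.I) * g ξ) = 0) :
    ∃ c : ℂ, ∀ᵐ ξ ∂(volume : Measure (EuclideanSpace ℝ (Fin d))),
      ((‖ξ‖^2 : ℂ) - Complex.I) * w ξ = c := by
  set v : EuclideanSpace ℝ (Fin d) → ℂ := fun ξ => ((‖ξ‖^2 : ℂ) - Complex.I) * w ξ with hv_def
  have hmul_cont : Continuous (fun ξ : EuclideanSpace ℝ (Fin d) => ((‖ξ‖^2 : ℂ) - Complex.I)) := by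
    fun_prop
  have hv : LocallyIntegrable v (volume : Measure (EuclideanSpace ℝ (Fin d))) :=
    locallyIntegrableOn_univ.1
      (((hw.locallyIntegrable one_le_two).locallyIntegrableOn Set.univ).continuousOn_mul
        hmul_cont.continuousOn isOpen_univ.isLocallyClosed)
  -- bump function
  let φ : ContDiffBump (0 : EuclideanSpace ℝ (Fin d)) := ⟨1, 2, one_pos, one_lt_two⟩
  set ψ : EuclideanSpace ℝ (Fin d) → ℝ := φ.normed volume with hψ_def
  have hψ_cont : Continuous ψ := φ.continuous_normed
  have hψ_supp : HasCompactSupport ψ := φ.hasCompactSupport_normed (μ := volume)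
  have hψ_int : ∫ ξ, ψ ξ = 1 := φ.integral_normed
  set c : ℂ := ∫ ξ, ψ ξ • v ξ with hc_def
  -- the key computation for any continuous compactly supported real g
  have key : ∀ g : EuclideanSpace ℝ (Fin d) → ℝ, Continuous g → HasCompactSupport g →
      ∫ ξ, g ξ • v ξ = (∫ ξ, g ξ) • c := by
    intro g hg hgs
    set a : ℝ := ∫ ξ, g ξ with ha_def
    set h : EuclideanSpace ℝ (Fin d) → ℝ := fun ξ => g ξ - a * ψ ξ with hh_def
    have hh_cont : Continuous h := hg.sub (continuous_const.mul hψ_cont)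
    have hh_supp : HasCompactSupport h :=
      hgs.comp₂_left (hψ_supp.mul_left (f := fun _ => a)) (sub_zero 0)
    have hgg_cont : Continuous (fun ξ : EuclideanSpace ℝ (Fin d) => (h ξ : ℂ)) :=
      Complex.continuous_ofReal.comp hh_cont
    have hgg_supp : HasCompactSupport (fun ξ : EuclideanSpace ℝ (Fin d) => (h ξ : ℂ)) :=
      hh_supp.comp_left (g := Complex.ofReal) Complex.ofReal_zero
    have h1 : MemLp (fun ξ : EuclideanSpace ℝ (Fin d) => (1 + (‖ξ‖^2 : ℂ)) * (h ξ : ℂ)) 2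
        (volume : Measure (EuclideanSpace ℝ (Fin d))) := by
      apply Continuous.memLp_of_hasCompactSupport (μ := volume)
      · fun_prop
      · exact hgg_supp.mul_left
    have h2 : Integrable (fun ξ : EuclideanSpace ℝ (Fin d) => (h ξ : ℂ)) volume :=
      hgg_cont.integrable_of_hasCompactSupport hgg_supp
    have hh_int : Integrable h volume := hh_cont.integrable_of_hasCompactSupport hh_supp
    have h3 : (∫ ξ, (h ξ : ℂ)) = 0 := by
      have hcomm := (ContinuousLinearMap.integral_comp_comm Complex.ofRealCLM hh_int).symm
      simp only [Complex.ofRealCLM_apply] at hcomm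
      rw [← hcomm]
      have : ∫ ξ, h ξ = 0 := by
        rw [hh_def]
        rw [integral_sub (hg.integrable_of_hasCompactSupport hgs)
          ((hψ_cont.integrable_of_hasCompactSupport hψ_supp).const_mul a)]
        rw [integral_const_mul, hψ_int]
        simp [ha_def]
      rw [this]; simp
    have h0 := horth (fun ξ => (h ξ : ℂ)) h1 h2 h3
    -- rewrite the integrand
    have heq : ∀ ξ : EuclideanSpace ℝ (Fin d),
        w ξ * starRingEnd ℂ (((‖ξ‖^2 : ℂ) + Complex.I) * (h ξ : ℂ)) = h ξ • v ξ := by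
      intro ξ
      simp only [map_mul, map_add, map_pow, Complex.conj_ofReal, Complex.conj_I, hv_def,
        Complex.real_smul]
      push_cast
      ring
    rw [show (fun ξ : EuclideanSpace ℝ (Fin d) =>
          w ξ * starRingEnd ℂ (((‖ξ‖^2 : ℂ) + Complex.I) * (h ξ : ℂ)))
        = fun ξ => h ξ • v ξ from funext heq] at h0
    -- split the integral
    have hi1 : Integrable (fun ξ => g ξ • v ξ) volume :=
      hv.integrable_smul_left_of_hasCompactSupport hg hgs
    have hi2 : Integrable (fun ξ => ψ ξ • v ξ) volume :=
      hv.integrable_smul_left_of_hasCompactSupport hψ_cont hψ_supp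
    have hi2' : Integrable (fun ξ => a • (ψ ξ • v ξ)) volume := hi2.smul a
    have hsplit : ∫ ξ, h ξ • v ξ = (∫ ξ, g ξ • v ξ) - a • ∫ ξ, ψ ξ • v ξ := by
      rw [← integral_smul, ← integral_sub hi1 hi2']
      congr 1
      funext ξ
      simp only [hh_def, sub_smul, smul_smul, Pi.smul_apply]
    rw [hsplit, sub_eq_zero] at h0
    rw [h0, hc_def]
  exact ⟨c, ae_eq_of_integral_contDiff_smul_eq hv (locallyIntegrable_const c)
    (fun g hg hgs => by rw [key g hg.continuous hgs, integral_smul_const])⟩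
end

section
/- The self-adjoint operator L^μ on L²(ℝ³) (μ < 0) has no eigenvalue λ ≥ 0: if φ ∈ D(L*) satisfies ⟨φ, (L̄ − λ)ψ⟩ = 0 for all ψ ∈ D(L̄) and λ ≥ 0, and φ ∈ L²(ℝ³), then φ = 0. Equivalently, the Fourier-space equation (|ξ|² − λ)φ̂ = c has no nonzero L² solution for λ ≥ 0 (for any constant c). -/
open MeasureTheory Complex Metric
open scoped ENNReal NNReal

/-- Superadditivity of `x ↦ x^(3/2)` expressed via square roots. -/
lemma cube_sqrt_superadd (lam δ : ℝ) (hlam : 0 ≤ lam) (hδ : 0 ≤ δ) :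
    Real.sqrt δ ^ 3 ≤ Real.sqrt (lam + δ) ^ 3 - Real.sqrt lam ^ 3 := by
  set b := Real.sqrt lam with hb
  set s := Real.sqrt δ with hs
  set r := Real.sqrt (lam + δ) with hr
  have hb0 : 0 ≤ b := Real.sqrt_nonneg _
  have hs0 : 0 ≤ s := Real.sqrt_nonneg _
  have hr0 : 0 ≤ r := Real.sqrt_nonneg _
  have hb2 : b ^ 2 = lam := Real.sq_sqrt hlam
  have hs2 : s ^ 2 = δ := Real.sq_sqrt hδ
  have hr2 : r ^ 2 = lam + δ := Real.sq_sqrt (by linarith)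
  have hbr : b ≤ r := Real.sqrt_le_sqrt (by linarith)
  set t := r - b with ht
  have ht0 : 0 ≤ t := by simp [ht]; linarith
  have hst : s ^ 2 = 2 * b * t + t ^ 2 := by
    have : r = b + t := by ring
    nlinarith [hr2, hb2, hs2]
  have key : s ^ 3 ≤ (b + t) ^ 3 - b ^ 3 := by
    nlinarith [mul_nonneg ht0 (sq_nonneg (s - (2 * b + t))), mul_nonneg hb0 ht0,
      sq_nonneg b, sq_nonneg t]
  have : r = b + t := by ring
  rw [this]
  exact key

/-- no self-adjoint extension L^μ has a nonnegative eigenvalue: for λ ≥ 0, the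
Fourier-space equation (|ξ|² − λ)ŵ = c (c any constant) has no nonzero L²(ℝ³) solution. -/
theorem stmt17 (lam : ℝ) (hlam : 0 ≤ lam) (c : ℂ) (w : EuclideanSpace ℝ (Fin 3) → ℂ)
    (hw : MemLp w 2 (volume : Measure (EuclideanSpace ℝ (Fin 3))))
    (heq : ∀ᵐ ξ ∂(volume : Measure (EuclideanSpace ℝ (Fin 3))),
      ((‖ξ‖^2 : ℂ) - (lam : ℂ)) * w ξ = c) :
    w =ᵐ[volume] 0 := by
  classical
  set μ : Measure (EuclideanSpace ℝ (Fin 3)) := volume with hμdef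
  -- Step 1: show c = 0.
  have hc : c = 0 := by
    by_contra hc
    have hcabs : 0 < ‖c‖ := by
      simpa [norm_pos_iff] using hc
    -- the integral of ‖w‖² is finite
    set I : ℝ≥0∞ := ∫⁻ ξ, (‖w ξ‖₊ : ℝ≥0∞) ^ (2 : ℝ) ∂μ with hIdef
    have hI_lt : I < ⊤ := by
      have := lintegral_rpow_enorm_lt_top_of_eLpNorm_lt_top (f := w) (μ := μ)
        (p := 2) two_ne_zero ENNReal.ofNat_ne_top hw.2
      simp only [enorm_eq_nnnorm] at this
      simpa [hIdef] using this
    set V : ℝ≥0∞ := μ (ball (0 : EuclideanSpace ℝ (Fin 3)) 1) with hVdef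
    have hV0 : V ≠ 0 := (measure_ball_pos μ _ one_pos).ne'
    have hVt : V ≠ ⊤ := measure_ball_lt_top.ne
    set M : ℝ := (I / V).toReal with hMdef
    have hM0 : 0 ≤ M := ENNReal.toReal_nonneg
    -- the key inequality, for every δ > 0
    have key : ∀ δ : ℝ, 0 < δ →
        (‖c‖ / δ) ^ 2 *
          (Real.sqrt (lam + δ) ^ 3 - Real.sqrt lam ^ 3) ≤ M := by
      intro δ hδ
      set r1 := Real.sqrt lam with hr1def
      set r2 := Real.sqrt (lam + δ) with hr2def
      have hr10 : 0 ≤ r1 := Real.sqrt_nonneg _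
      have hr20 : 0 ≤ r2 := Real.sqrt_nonneg _
      have hr12 : r1 < r2 := Real.sqrt_lt_sqrt hlam (by linarith)
      set A : Set (EuclideanSpace ℝ (Fin 3)) :=
        ball 0 r2 \ closedBall 0 r1 with hAdef
      have mA : MeasurableSet A := measurableSet_ball.diff measurableSet_closedBall
      -- measure of the annulus
      have hμA : μ A = ENNReal.ofReal (r2 ^ 3) * V - ENNReal.ofReal (r1 ^ 3) * V := by
        rw [hAdef, measure_diff (closedBall_subset_ball hr12)
          measurableSet_closedBall.nullMeasurableSet measure_closedBall_lt_top.ne,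
          Measure.addHaar_ball μ _ hr20, Measure.addHaar_closedBall μ _ hr10,
          finrank_euclideanSpace_fin]
      have hμA_lb : ENNReal.ofReal (r2 ^ 3 - r1 ^ 3) * V ≤ μ A := by
        rw [hμA, ENNReal.ofReal_sub _ (pow_nonneg hr10 3)]
        exact le_of_eq (ENNReal.sub_mul fun _ _ => hVt)
      -- pointwise lower bound on A
      have hpt : ∀ᵐ ξ ∂(μ.restrict A),
          ENNReal.ofReal (‖c‖ / δ) ^ (2 : ℝ) ≤ (‖w ξ‖₊ : ℝ≥0∞) ^ (2 : ℝ) := by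
        filter_upwards [ae_restrict_of_ae heq, ae_restrict_mem mA] with ξ hξ hmem
        have h1 : ‖ξ‖ < r2 := by simpa using hmem.1
        have h2 : r1 < ‖ξ‖ := by
          have := hmem.2
          simp only [mem_closedBall, dist_zero_right, not_le] at this
          exact this
        have hξ0 : 0 < ‖ξ‖ := lt_of_le_of_lt hr10 h2
        have hlt1 : lam < ‖ξ‖ ^ 2 := by
          have := Real.sq_sqrt hlam
          nlinarith
        have hlt2 : ‖ξ‖ ^ 2 < lam + δ := by
          have := Real.sq_sqrt (show (0:ℝ) ≤ lam + δ by linarith)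
          nlinarith
        -- |c| ≤ δ * ‖w ξ‖
        have habs : ‖c‖ ≤ δ * ‖w ξ‖ := by
          have : ((‖ξ‖^2 : ℂ) - (lam : ℂ)) = ((‖ξ‖ ^ 2 - lam : ℝ) : ℂ) := by push_cast; ring
          rw [← hξ, this, norm_mul, Complex.norm_real, Real.norm_eq_abs, abs_of_pos (by linarith)]
          have hwn : ‖w ξ‖ = ‖w ξ‖ := rfl
          rw [hwn]
          have : ‖ξ‖ ^ 2 - lam ≤ δ := by linarith
          exact mul_le_mul_of_nonneg_right this (norm_nonneg _) |>.trans_eq rfl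
            |> le_trans (le_refl _)
        have hdiv : ‖c‖ / δ ≤ ‖w ξ‖ := by
          rw [div_le_iff₀ hδ]
          linarith [habs]
        have : ENNReal.ofReal (‖c‖ / δ) ≤ (‖w ξ‖₊ : ℝ≥0∞) := by
          rw [← ENNReal.ofReal_coe_nnreal, coe_nnnorm]
          exact ENNReal.ofReal_le_ofReal hdiv
        exact ENNReal.rpow_le_rpow this (by norm_num)
      have hcheb : ENNReal.ofReal (‖c‖ / δ) ^ (2 : ℝ) * μ A ≤ I := by
        calc ENNReal.ofReal (‖c‖ / δ) ^ (2 : ℝ) * μ A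
            = ∫⁻ _ in A, ENNReal.ofReal (‖c‖ / δ) ^ (2 : ℝ) ∂μ :=
              (setLIntegral_const A _).symm
          _ ≤ ∫⁻ ξ in A, (‖w ξ‖₊ : ℝ≥0∞) ^ (2 : ℝ) ∂μ := lintegral_mono_ae hpt
          _ ≤ I := setLIntegral_le_lintegral A _
      -- combine
      have hcomb : ENNReal.ofReal ((‖c‖ / δ) ^ 2 * (r2 ^ 3 - r1 ^ 3)) * V ≤ I := by
        have hre : ENNReal.ofReal ((‖c‖ / δ) ^ 2 * (r2 ^ 3 - r1 ^ 3))
            = ENNReal.ofReal (‖c‖ / δ) ^ (2 : ℝ) * ENNReal.ofReal (r2 ^ 3 - r1 ^ 3) := by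
          rw [ENNReal.ofReal_mul (by positivity), ENNReal.ofReal_pow (by positivity),
            ← ENNReal.rpow_natCast]
          norm_num
        rw [hre, mul_assoc]
        calc ENNReal.ofReal (‖c‖ / δ) ^ (2 : ℝ) *
              (ENNReal.ofReal (r2 ^ 3 - r1 ^ 3) * V)
            ≤ ENNReal.ofReal (‖c‖ / δ) ^ (2 : ℝ) * μ A :=
              mul_le_mul_right hμA_lb _
          _ ≤ I := hcheb
      -- pass to real numbers
      have h1 : ENNReal.ofReal ((‖c‖ / δ) ^ 2 * (r2 ^ 3 - r1 ^ 3)) ≤ I / V :=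
        (ENNReal.le_div_iff_mul_le (Or.inl hV0) (Or.inl hVt)).2 hcomb
      have h2 : I / V ≠ ⊤ := (ENNReal.div_lt_top hI_lt.ne hV0).ne
      exact (ENNReal.ofReal_le_iff_le_toReal h2).1 h1
    -- derive a contradiction by choosing δ small
    set a : ℝ := ‖c‖ with hadef
    have ha : 0 < a := hcabs
    set δ : ℝ := (a ^ 2 / (M + a ^ 2)) ^ 2 with hδdef
    have hden : 0 < M + a ^ 2 := by positivity
    have hδpos : 0 < δ := by positivity
    have hsqrtδ : Real.sqrt δ = a ^ 2 / (M + a ^ 2) := by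
      rw [hδdef, Real.sqrt_sq (by positivity)]
    have hkey := key δ hδpos
    have hsup := cube_sqrt_superadd lam δ hlam hδpos.le
    have hfinal : (a / δ) ^ 2 * Real.sqrt δ ^ 3 ≤ M := by
      calc (a / δ) ^ 2 * Real.sqrt δ ^ 3
          ≤ (a / δ) ^ 2 * (Real.sqrt (lam + δ) ^ 3 - Real.sqrt lam ^ 3) := by
            apply mul_le_mul_of_nonneg_left hsup (by positivity)
        _ ≤ M := hkey
    -- simplify: (a/δ)² * (√δ)³ = a² / √δ
    have hδsq : Real.sqrt δ ^ 2 = δ := Real.sq_sqrt hδpos.le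
    have hsδ : 0 < Real.sqrt δ := Real.sqrt_pos.2 hδpos
    have hval : (a / δ) ^ 2 * Real.sqrt δ ^ 3 = a ^ 2 / Real.sqrt δ := by
      rw [div_pow, show δ ^ 2 = Real.sqrt δ ^ 4 by rw [show Real.sqrt δ ^ 4 = (Real.sqrt δ ^ 2) ^ 2 by ring, hδsq]]
      field_simp
    rw [hval, hsqrtδ] at hfinal
    -- a² / (a²/(M+a²)) = M + a² ≤ M, contradiction
    have : a ^ 2 / (a ^ 2 / (M + a ^ 2)) = M + a ^ 2 := by
      field_simp
    rw [this] at hfinal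
    nlinarith
  -- Step 2: conclude w = 0 a.e.
  have hsph : μ (sphere (0 : EuclideanSpace ℝ (Fin 3)) (Real.sqrt lam)) = 0 :=
    Measure.addHaar_sphere μ 0 _
  have hns : ∀ᵐ ξ ∂μ, ξ ∉ sphere (0 : EuclideanSpace ℝ (Fin 3)) (Real.sqrt lam) :=
    measure_eq_zero_iff_ae_notMem.mp hsph
  filter_upwards [heq, hns] with ξ h1 h2
  rw [hc] at h1
  have hnorm : ‖ξ‖ ≠ Real.sqrt lam := by
    simpa [mem_sphere_zero_iff_norm] using h2
  have hsq : (‖ξ‖ ^ 2 : ℝ) ≠ lam := by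
    intro h
    apply hnorm
    rw [← h, Real.sqrt_sq (norm_nonneg _)]
  have hfac : ((‖ξ‖^2 : ℂ) - (lam : ℂ)) ≠ 0 := by
    have : ((‖ξ‖^2 : ℂ) - (lam : ℂ)) = ((‖ξ‖ ^ 2 - lam : ℝ) : ℂ) := by push_cast; ring
    rw [this]
    exact_mod_cast sub_ne_zero.2 hsq
  have := mul_eq_zero.1 h1
  rcases this with h | h
  · exact absurd h hfac
  · simpa using h
end
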